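/- arXiv:1610.08994 — 2 statements merged into one kernel-verified Lean document; each statement's English description precedes it below -/
import Mathlib

section
/- Let G = B wr X be a wreath product of abelian groups with X torsion-free and B nontrivial, let H ≤ G have finite index m, and let f : H → G be a simple virtual endomorphism. If x ∈ X is nontrivial, then f(x^m) is nontrivial. -/
def shiftEquiv {B X : Type*} [AddCommGroup B] [AddCommGroup X] (x : X) :
    (X →₀ B) ≃+ (X →₀ B) := Finsupp.domCongr (Equiv.addRight x)

noncomputable def shiftHom (B X : Type*) [AddCommGroup B] [AddCommGroup X] :
    Multiplicative X →* Multiplicative (AddAut (X →₀ B)) :=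
  MonoidHom.mk' (fun x => Multiplicative.ofAdd (shiftEquiv x.toAdd)) (by
    intro a b
    show (shiftEquiv (a * b).toAdd : AddAut (X →₀ B)) = shiftEquiv a.toAdd + shiftEquiv b.toAdd
    apply AddEquiv.ext
    intro f
    ext y
    simp [shiftEquiv, Finsupp.domCongr, Equiv.Perm.mul_def, sub_eq_add_neg, AddAut.add_apply]
    congr 1
    abel)

noncomputable def wreathAct (B X : Type*) [AddCommGroup B] [AddCommGroup X] :
    Multiplicative X →* MulAut (Multiplicative (X →₀ B)) :=
  { toFun := fun x => AddEquiv.toMultiplicative (Multiplicative.toAdd (shiftHom B X x))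
    map_one' := by ext f; simp
    map_mul' := by intro a b; ext f; simp }

/-- The old Mathlib `AddMonoid.IsTorsionFree`, removed since; restored with its old meaning. -/
def AddMonoid.IsTorsionFree (G : Type*) [AddMonoid G] : Prop :=
  ∀ g : G, g ≠ 0 → ¬IsOfFinAddOrder g

abbrev Wreath (B X : Type*) [AddCommGroup B] [AddCommGroup X] :=
  SemidirectProduct (Multiplicative (X →₀ B)) (Multiplicative X) (wreathAct B X)

lemma shiftEquiv_apply {B X : Type*} [AddCommGroup B] [AddCommGroup X] (s : X) (a : X →₀ B)
    (y : X) : shiftEquiv s a y = a (y - s) := by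
  simp [shiftEquiv, sub_eq_add_neg]

lemma shift_fixed_eq_zero {B X : Type*} [AddCommGroup B] [AddCommGroup X] {s : X}
    (hs : ¬ IsOfFinAddOrder s) {a : X →₀ B} (h : shiftEquiv s a = a) : a = 0 := by
  by_contra ha
  obtain ⟨y, hy⟩ : ∃ y, a y ≠ 0 := by
    by_contra h'; push_neg at h'; exact ha (Finsupp.ext h')
  have hpt : ∀ z, a (z - s) = a z := by
    intro z; conv_rhs => rw [← h]
    rw [shiftEquiv_apply]
  have hpt' : ∀ z, a (z + s) = a z := by
    intro z; have := hpt (z + s); rw [add_sub_cancel_right] at this; exact this.symm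
  have key : ∀ n : ℕ, a (y + n • s) ≠ 0 := by
    intro n; induction n with
    | zero => simpa
    | succ n ih =>
      have e : y + (n + 1) • s = (y + n • s) + s := by rw [succ_nsmul]; abel
      rw [e, hpt']; exact ih
  have hinj : Function.Injective (fun n : ℕ => n • s) :=
    injective_nsmul_iff_not_isOfFinAddOrder.mpr hs
  have hinj2 : Function.Injective (fun n : ℕ => y + n • s) :=
    fun n k hk => hinj (by simpa using add_left_cancel hk)
  have : (↑a.support : Set X).Infinite :=
    Set.infinite_of_injective_forall_mem hinj2
      (fun n => by simpa [Finsupp.mem_support_iff] using key n)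
  exact this a.support.finite_toSet

lemma shiftEquiv_comm {B X : Type*} [AddCommGroup B] [AddCommGroup X] (u v : X) (a : X →₀ B) :
    shiftEquiv u (shiftEquiv v a) = shiftEquiv v (shiftEquiv u a) := by
  ext y
  rw [shiftEquiv_apply, shiftEquiv_apply, shiftEquiv_apply, shiftEquiv_apply]
  congr 1
  abel

/-- In a self-similar `G = B wr X` (via a simple virtual endomorphism
`f : H → G`, `[G:H] = m`) with `B` nontrivial abelian and `X` torsion-free abelian,
if `x ∈ X` is nontrivial then `f(x^m)` is nontrivial. -/
theorem stmt8 {B X : Type*} [AddCommGroup B] [AddCommGroup X] [Nontrivial B]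
    (hX : AddMonoid.IsTorsionFree X)
    (H : Subgroup (Wreath B X)) [H.FiniteIndex] (f : H →* Wreath B X)
    (hsimple : ∀ K : Subgroup (Wreath B X), K.Normal → ∀ hK : K ≤ H,
      (∀ k (hk : k ∈ K), f ⟨k, hK hk⟩ ∈ K) → K = ⊥)
    (x : X) (hx : x ≠ 0)
    (hmem : (SemidirectProduct.inr (Multiplicative.ofAdd x) : Wreath B X) ^ H.index ∈ H) :
    f ⟨(SemidirectProduct.inr (Multiplicative.ofAdd x) : Wreath B X) ^ H.index, hmem⟩ ≠ 1 := by
  intro hf1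
  classical
  set m := H.index with hm
  set ι : Multiplicative (X →₀ B) →* Wreath B X := SemidirectProduct.inl with hι
  set N := H.normalCore with hNdef
  haveI : N.Normal := H.normalCore_normal
  haveI : N.FiniteIndex := Subgroup.finiteIndex_normalCore H
  have hmne : m ≠ 0 := Subgroup.FiniteIndex.index_ne_zero
  have hxord : ¬ IsOfFinAddOrder x := hX x hx
  set s : X := m • x with hsdef
  have hsne : s ≠ 0 := by
    intro h0
    exact hxord (isOfFinAddOrder_iff_nsmul_eq_zero.mpr ⟨m, Nat.pos_of_ne_zero hmne, h0⟩)
  have hsord : ¬ IsOfFinAddOrder s := hX s hsne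
  set t : Wreath B X := SemidirectProduct.inr (Multiplicative.ofAdd x) ^ m with htdef
  have ht : t = SemidirectProduct.inr (Multiplicative.ofAdd s) := by
    rw [htdef, ← map_pow, ← ofAdd_nsmul]
  -- basic homomorphism facts
  have ιadd : ∀ u v : X →₀ B, ι (Multiplicative.ofAdd (u + v)) =
      ι (Multiplicative.ofAdd u) * ι (Multiplicative.ofAdd v) := by
    intro u v; rw [ofAdd_add, map_mul]
  have ιneg : ∀ u : X →₀ B, ι (Multiplicative.ofAdd (-u)) = (ι (Multiplicative.ofAdd u))⁻¹ := by
    intro u; rw [ofAdd_neg, map_inv]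
  -- conjugation formula
  have hconj : ∀ (u : Multiplicative X) (p : X →₀ B),
      ι (Multiplicative.ofAdd (shiftEquiv u.toAdd p)) =
        SemidirectProduct.inr u * ι (Multiplicative.ofAdd p) * (SemidirectProduct.inr u)⁻¹ := by
    intro u p
    have h := SemidirectProduct.inl_aut (φ := wreathAct B X) u (Multiplicative.ofAdd p)
    have e : (wreathAct B X u) (Multiplicative.ofAdd p) =
        Multiplicative.ofAdd (shiftEquiv u.toAdd p) := rfl
    rw [e, map_inv] at h
    exact h
  have conj_inl : ∀ (g : Wreath B X) (u : X →₀ B),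
      g * ι (Multiplicative.ofAdd u) * g⁻¹ =
        ι (Multiplicative.ofAdd (shiftEquiv g.right.toAdd u)) := by
    intro g u
    obtain ⟨L, R⟩ := g
    show (⟨L, R⟩ : Wreath B X) * ι (Multiplicative.ofAdd u) * (⟨L, R⟩ : Wreath B X)⁻¹ =
      ι (Multiplicative.ofAdd (shiftEquiv R.toAdd u))
    rw [SemidirectProduct.mk_eq_inl_mul_inr]
    calc SemidirectProduct.inl L * SemidirectProduct.inr R * ι (Multiplicative.ofAdd u) *
          (SemidirectProduct.inl L * SemidirectProduct.inr R)⁻¹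
        = SemidirectProduct.inl L *
            (SemidirectProduct.inr R * ι (Multiplicative.ofAdd u) *
              (SemidirectProduct.inr R)⁻¹) * (SemidirectProduct.inl L)⁻¹ := by
          group
      _ = SemidirectProduct.inl L * ι (Multiplicative.ofAdd (shiftEquiv R.toAdd u)) *
            (SemidirectProduct.inl L)⁻¹ := by rw [← hconj]
      _ = ι (Multiplicative.ofAdd (shiftEquiv R.toAdd u)) := by
          rw [hι, ← map_inv, ← map_mul, ← map_mul, mul_comm L, mul_assoc,
            mul_inv_cancel, mul_one]
  -- the subgroup K
  let K : Subgroup (Wreath B X) :=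
  { carrier := { g | ∃ p : X →₀ B, ι (Multiplicative.ofAdd p) ∈ N ∧
      g = ι (Multiplicative.ofAdd (shiftEquiv s p - p)) }
    one_mem' := ⟨0, by simpa using one_mem N, by simp⟩
    mul_mem' := by
      rintro g1 g2 ⟨p, hp, rfl⟩ ⟨q, hq, rfl⟩
      refine ⟨p + q, ?_, ?_⟩
      · rw [ιadd]; exact mul_mem hp hq
      · have e : shiftEquiv s (p + q) - (p + q) =
            (shiftEquiv s p - p) + (shiftEquiv s q - q) := by
          rw [map_add]; abel
        rw [e, ιadd]
    inv_mem' := by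
      rintro g ⟨p, hp, rfl⟩
      refine ⟨-p, ?_, ?_⟩
      · rw [ιneg]; exact inv_mem hp
      · have e : shiftEquiv s (-p) - (-p) = -(shiftEquiv s p - p) := by
          rw [map_neg]; abel
        rw [e, ιneg] }
  have hKmem : ∀ g, g ∈ K ↔ ∃ p : X →₀ B, ι (Multiplicative.ofAdd p) ∈ N ∧
      g = ι (Multiplicative.ofAdd (shiftEquiv s p - p)) := fun g => Iff.rfl
  -- K is normal
  have hKnormal : K.Normal := by
    constructor
    intro n hn g
    obtain ⟨p, hp, rfl⟩ := hn
    rw [hKmem, conj_inl]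
    refine ⟨shiftEquiv g.right.toAdd p, ?_, ?_⟩
    · rw [hconj]
      exact (‹N.Normal›).conj_mem _ hp _
    · rw [map_sub, shiftEquiv_comm]
  -- specialized conjugation by t
  have hconjs : ∀ p : X →₀ B, ι (Multiplicative.ofAdd (shiftEquiv s p)) =
      t * ι (Multiplicative.ofAdd p) * t⁻¹ := by
    intro p; rw [ht]; exact hconj (Multiplicative.ofAdd s) p
  -- K ≤ N ≤ H
  have hKN : K ≤ N := by
    rintro k ⟨p, hp, rfl⟩
    have h1 : ι (Multiplicative.ofAdd (shiftEquiv s p)) ∈ N := by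
      rw [hconjs]
      exact (‹N.Normal›).conj_mem _ hp _
    have e : ι (Multiplicative.ofAdd (shiftEquiv s p - p)) =
        ι (Multiplicative.ofAdd (shiftEquiv s p)) * (ι (Multiplicative.ofAdd p))⁻¹ := by
      rw [sub_eq_add_neg, ιadd, ιneg]
    rw [e]
    exact mul_mem h1 (inv_mem hp)
  have hKH : K ≤ H := le_trans hKN H.normalCore_le
  -- K is f-invariant
  have hKinv : ∀ k (hk : k ∈ K), f ⟨k, hKH hk⟩ ∈ K := by
    intro k hk
    obtain ⟨p, hp, rfl⟩ := hk
    have hpH : ι (Multiplicative.ofAdd p) ∈ H := H.normalCore_le hp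
    have hkeq : ι (Multiplicative.ofAdd (shiftEquiv s p - p)) =
        t * ι (Multiplicative.ofAdd p) * t⁻¹ * (ι (Multiplicative.ofAdd p))⁻¹ := by
      rw [sub_eq_add_neg, ιadd, ιneg, hconjs]
    have hsub : (⟨ι (Multiplicative.ofAdd (shiftEquiv s p - p)), hKH ⟨p, hp, rfl⟩⟩ : H) =
        ⟨t, hmem⟩ * ⟨ι (Multiplicative.ofAdd p), hpH⟩ * (⟨t, hmem⟩ : H)⁻¹ *
          (⟨ι (Multiplicative.ofAdd p), hpH⟩ : H)⁻¹ := Subtype.ext hkeq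
    have hft : f ⟨t, hmem⟩ = 1 := hf1
    rw [hsub, map_mul, map_mul, map_mul, map_inv, map_inv, hft, one_mul, inv_one, mul_one,
      mul_inv_cancel]
    exact K.one_mem
  have hKbot := hsimple K hKnormal hKH hKinv
  -- contradiction: K is nontrivial
  haveI : Finite (Wreath B X ⧸ N) := Subgroup.finite_quotient_of_finiteIndex
  obtain ⟨b, hb⟩ := exists_ne (0 : B)
  obtain ⟨k, l, hkl, hF⟩ := Finite.exists_ne_map_eq_of_infinite
    (fun n : ℕ => (QuotientGroup.mk (ι (Multiplicative.ofAdd (Finsupp.single (n • x) b))) :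
      Wreath B X ⧸ N))
  set u := Finsupp.single (k • x) b with hu
  set v := Finsupp.single (l • x) b with hv
  have h2 : (ι (Multiplicative.ofAdd u))⁻¹ * ι (Multiplicative.ofAdd v) ∈ N :=
    QuotientGroup.eq.mp hF
  have hmemN : ι (Multiplicative.ofAdd (v - u)) ∈ N := by
    have e : ι (Multiplicative.ofAdd (v - u)) =
        (ι (Multiplicative.ofAdd u))⁻¹ * ι (Multiplicative.ofAdd v) := by
      rw [← ιneg, ← ιadd, sub_eq_neg_add]
    rw [e]
    exact h2
  have hxinj : Function.Injective (fun n : ℕ => n • x) :=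
    injective_nsmul_iff_not_isOfFinAddOrder.mpr hxord
  have hne : k • x ≠ l • x := fun h => hkl (hxinj h)
  have hpne : v - u ≠ 0 := by
    intro h0
    have h3 : (v - u) (l • x) = 0 := by rw [h0]; rfl
    rw [Finsupp.sub_apply, hu, hv, Finsupp.single_eq_same, Finsupp.single_eq_of_ne' hne] at h3
    simp at h3
    exact hb h3
  have hwne : shiftEquiv s (v - u) - (v - u) ≠ 0 := by
    intro h0
    exact hpne (shift_fixed_eq_zero hsord (by rwa [sub_eq_zero] at h0))
  have hKel : ι (Multiplicative.ofAdd (shiftEquiv s (v - u) - (v - u))) ∈ K :=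
    ⟨v - u, hmemN, rfl⟩
  rw [hKbot, Subgroup.mem_bot] at hKel
  apply hwne
  have h4 := SemidirectProduct.inl_injective (φ := wreathAct B X)
    (hKel.trans (map_one ι).symm)
  exact Multiplicative.ofAdd.injective (h4.trans ofAdd_zero.symm)
end

section
/- Let G = B wr X with B, X abelian, X torsion-free nontrivial, and A the base group. If [A^m, X^m] = 1 for some m ≥ 1, then A^m = 1, i.e., B has exponent dividing m. -/
/-- In `G = B wr X` with `B, X` abelian, `X` torsion-free and nontrivial,
if `[A^m, X^m] = 1` for some `m ≥ 1` (every m-th power in the base group `A` is fixed by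
translation by every m-th power in `X`), then `A^m = 1`, i.e. `B` has exponent dividing `m`. -/
theorem stmt13 {B X : Type*} [AddCommGroup B] [AddCommGroup X] [Nontrivial X]
    (hX : AddMonoid.IsTorsionFree X) (m : ℕ) (hm : 1 ≤ m)
    (h : ∀ (a : X →₀ B) (x : X), shiftEquiv (m • x) (m • a) = m • a) :
    ∀ b : B, m • b = 0 := by
  intro b
  obtain ⟨x, hx⟩ := exists_ne (0 : X)
  have hxm : m • x ≠ 0 := by
    intro hc
    exact hX x hx (isOfFinAddOrder_iff_nsmul_eq_zero.2 ⟨m, hm, hc⟩)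
  have := DFunLike.congr_fun (h (Finsupp.single 0 b) x) (m • x)
  simp [shiftEquiv, Finsupp.single_apply, hxm, Ne.symm hxm] at this
  exact this
end
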